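/- If G is a K_{r+1}-free graph on n vertices, then its number of edges is at most that of the Turán graph T_r(n), the complete r-partite graph with parts as equal as possible. -/

import Mathlib

/-- **Turán's theorem** (edge count form): a `K_{r+1}`-free graph on `n` vertices has
at most as many edges as the Turán graph `T_r(n)`. -/
theorem turan_edge_bound (n r : ℕ) (G : SimpleGraph (Fin n)) [DecidableRel G.Adj]
    (hG : G.CliqueFree (r + 1)) :
    G.edgeFinset.card ≤ (SimpleGraph.turanGraph n r).edgeFinset.card := by
  rcases Nat.eq_zero_or_pos r with rfl | hr
  · -- `CliqueFree 1` means there are no vertices, so no edges.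
    have hempty : IsEmpty (Fin n) := by
      by_contra h
      rw [not_isEmpty_iff] at h
      obtain ⟨x⟩ := h
      exact hG {x} (by simp [SimpleGraph.isNClique_iff, SimpleGraph.isClique_iff, Set.Pairwise])
    have : G.edgeFinset = ∅ := by
      ext e
      refine e.ind (fun a b => ?_)
      exact (hempty.false a).elim
    simp [this]
  · exact (SimpleGraph.isTuranMaximal_turanGraph hr).2 hG
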